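/- Let n ∈ ℕ be even and positive, let r ∈ {1, …, n/2}, set b = 2(r−1), a = 3r(n−b)(n+b)/(3r(n−b) − 2n), and λ = a/(n−b), assuming 3r(n−b) − 2n > 0. Then for every integer m with n/2 + 1 ≤ m ≤ n/2 + r − 1, it holds that (1/λ)·(m/n) + λ·((n−m)/n) ≥ 1 + (λ − 1)/(3r). -/

import Mathlib

/-- Key drift inequality in the analysis of RLS on HasMajority. -/
theorem key_drift_inequality
    (n r : ℕ) (hn : 0 < n) (heven : Even n) (hr1 : 1 ≤ r) (hr2 : r ≤ n / 2)
    (b a lam : ℝ)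
    (hb : b = 2 * ((r : ℝ) - 1))
    (hden : 0 < 3 * (r : ℝ) * ((n : ℝ) - b) - 2 * n)
    (ha : a = 3 * (r : ℝ) * ((n : ℝ) - b) * ((n : ℝ) + b) /
      (3 * (r : ℝ) * ((n : ℝ) - b) - 2 * n))
    (hlam : lam = a / ((n : ℝ) - b)) :
    ∀ m : ℕ, n / 2 + 1 ≤ m → m ≤ n / 2 + r - 1 →
      1 + (lam - 1) / (3 * (r : ℝ)) ≤
        (1 / lam) * ((m : ℝ) / n) + lam * (((n : ℝ) - m) / n) := by
  intro m hm1 hm2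
  obtain ⟨k, hk⟩ := heven
  have hr : (1:ℝ) ≤ r := by exact_mod_cast hr1
  have hN : (0:ℝ) < n := by exact_mod_cast hn
  have hb0 : 0 ≤ b := by rw [hb]; linarith
  have hNb : (0:ℝ) < (n:ℝ) - b := by nlinarith [hden]
  have h2m : 2 * (m:ℝ) ≤ (n:ℝ) + b := by
    have h1 : m + 1 ≤ k + r := by omega
    have h2 : (m:ℝ) + 1 ≤ (k:ℝ) + r := by exact_mod_cast h1
    have hkn : (n:ℝ) = 2*(k:ℝ) := by
      have : n = k + k := hk
      push_cast [this]; ring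
    rw [hb]; nlinarith
  have hlamD : lam * (3 * (r:ℝ) * ((n:ℝ) - b) - 2 * n) = 3 * (r:ℝ) * ((n:ℝ) + b) := by
    rw [hlam, ha]
    rw [div_div, div_mul_eq_mul_div, div_eq_iff (by positivity)]
    ring
  have hlam1 : 1 ≤ lam := by nlinarith [hlamD, hden, hb0, hN]
  have hlampos : 0 < lam := by linarith
  have hRpos : (0:ℝ) < 3 * (r:ℝ) := by linarith
  have hlam2 : lam * (lam * (3 * (r:ℝ) * ((n:ℝ) - b) - 2 * n)) = lam * (3 * (r:ℝ) * ((n:ℝ) + b)) := by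
    rw [hlamD]
  rw [← sub_nonneg]
  have expand : 1 / lam * ((m:ℝ) / n) + lam * (((n:ℝ) - m) / n) - (1 + (lam - 1) / (3 * (r:ℝ)))
      = (3 * (r:ℝ) * m + 3 * r * lam^2 * ((n:ℝ) - m) - 3 * r * lam * n - lam^2 * n + lam * n)
        / (3 * (r:ℝ) * lam * n) := by
    field_simp
    ring
  rw [expand]
  apply div_nonneg _ (by positivity)
  have hP : (0:ℝ) ≤ 3 / 2 * r * (lam * lam - 1) * ((n:ℝ) + b - 2 * m) :=
    mul_nonneg (mul_nonneg (mul_nonneg (by norm_num) (by linarith))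
      (by nlinarith)) (by linarith)
  linarith [hP, hlamD, hlam2]
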